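/- Every locally dominated input is locally dominated by some subset consisting entirely of non-locally-dominated inputs: for every in ∈ T such that in ⊑ S₀ for some S₀, there exists S ⊆ T with in ⊑ S and no element of S is locally dominated by any subset of T. -/

import Mathlib

/-- Input `i` is locally dominated by subset `S`. -/
def LocDom {Inp Obj : Type*} [DecidableEq Obj]
    (Cov : Inp → Finset Obj) (cost : Inp → ℝ) (i : Inp) (S : Finset Inp) : Prop :=
  i ∉ S ∧ Cov i ⊆ S.biUnion Cov ∧ ∑ x ∈ S, cost x ≤ cost i

private lemma sum_biUnion_le_of_nonneg {ι α : Type*} [DecidableEq α]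
    (s : Finset ι) (F : ι → Finset α) (f : α → ℝ)
    (hf : ∀ a ∈ s.biUnion F, 0 ≤ f a) :
    ∑ a ∈ s.biUnion F, f a ≤ ∑ x ∈ s, ∑ a ∈ F x, f a := by
  classical
  induction s using Finset.induction with
  | empty => simp
  | insert _ _ hx ih =>
    rename_i a s
    rw [Finset.biUnion_insert] at hf
    rw [Finset.biUnion_insert, Finset.sum_insert hx]
    have hf1 : ∀ b ∈ F a, 0 ≤ f b := fun b hb => hf b (Finset.mem_union_left _ hb)
    have hf2 : ∀ b ∈ s.biUnion F, 0 ≤ f b := fun b hb => hf b (Finset.mem_union_right _ hb)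
    have h := Finset.sum_union_inter (s₁ := F a) (s₂ := s.biUnion F) (f := f)
    have h2 : 0 ≤ ∑ b ∈ F a ∩ s.biUnion F, f b :=
      Finset.sum_nonneg fun b hb => hf1 b (Finset.mem_inter.mp hb).1
    have h3 := ih hf2
    linarith

/-- Local dominance hierarchy: every locally dominated input is locally dominated
by a subset of non-locally-dominated inputs. -/
theorem locDom_hierarchy {Inp Obj : Type*} [DecidableEq Inp] [DecidableEq Obj]
    (T : Finset Inp) (Cov : Inp → Finset Obj) (cost : Inp → ℝ)
    (hCov : ∀ i ∈ T, (Cov i).Nonempty) (hcost : ∀ i ∈ T, 0 < cost i)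
    (hNoDup : ∀ i₁ ∈ T, ∀ i₂ ∈ T, Cov i₁ = Cov i₂ → cost i₁ = cost i₂ → i₁ = i₂)
    (i : Inp) (hi : i ∈ T)
    (hdom : ∃ S₀ : Finset Inp, S₀ ⊆ T ∧ LocDom Cov cost i S₀) :
    ∃ S : Finset Inp, S ⊆ T ∧ LocDom Cov cost i S ∧
      ∀ x ∈ S, ¬ ∃ S' : Finset Inp, S' ⊆ T ∧ LocDom Cov cost x S' := by
  classical
  set Dom : Inp → Prop := fun x => ∃ S' : Finset Inp, S' ⊆ T ∧ LocDom Cov cost x S' with hDom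
  set P : Inp → Inp → Prop := fun y x => cost y < cost x ∨ (cost y = cost x ∧ Cov x ⊂ Cov y)
    with hP
  -- members of a dominating set precede the dominated element
  have key : ∀ x ∈ T, ∀ S' ⊆ T, LocDom Cov cost x S' → ∀ y ∈ S', P y x := by
    rintro x hx S' hS' ⟨hxS, hcov, hsum⟩ y hy
    by_cases hlt : cost y < cost x
    · exact Or.inl hlt
    · push_neg at hlt
      have h1 : cost y ≤ ∑ z ∈ S', cost z :=
        Finset.single_le_sum (f := cost) (fun z hz => (hcost z (hS' hz)).le) hy
      have hceq : cost y = cost x := le_antisymm (h1.trans hsum) hlt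
      have herase : S'.erase y = ∅ := by
        by_contra hne
        obtain ⟨z, hz⟩ := Finset.nonempty_of_ne_empty hne
        have hz' : z ∈ S' := Finset.mem_of_mem_erase hz
        have hpos : 0 < ∑ w ∈ S'.erase y, cost w :=
          Finset.sum_pos' (fun w hw => (hcost w (hS' (Finset.mem_of_mem_erase hw))).le)
            ⟨z, hz, hcost z (hS' hz')⟩
        have hsplit : ∑ w ∈ S'.erase y, cost w + cost y = ∑ w ∈ S', cost w :=
          Finset.sum_erase_add _ _ hy
        linarith
      have hSy : S' = {y} := by
        rcases (Finset.erase_eq_empty_iff _ _).mp herase with h | h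
        · exact absurd (h ▸ hy) (Finset.notMem_empty y)
        · exact h
      subst hSy
      have hcsub : Cov x ⊆ Cov y := by simpa using hcov
      refine Or.inr ⟨hceq, hcsub.ssubset_of_ne ?_⟩
      intro hcc
      have hyx : x = y := hNoDup x hx y (hS' (Finset.mem_singleton_self y)) hcc hceq.symm
      exact hxS (hyx ▸ Finset.mem_singleton_self y)
  have Pirrefl : ∀ a, ¬ P a a := by
    rintro a (h | ⟨_, h⟩)
    · exact lt_irrefl _ h
    · exact (ssubset_irrefl _) h
  have Ptrans : ∀ {a b c}, P a b → P b c → P a c := by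
    rintro a b c (h1 | ⟨h1, h1'⟩) (h2 | ⟨h2, h2'⟩)
    · exact Or.inl (h1.trans h2)
    · exact Or.inl (h2 ▸ h1)
    · exact Or.inl (h1 ▸ h2)
    · exact Or.inr ⟨h1.trans h2, h2'.trans_subset h1'.subset⟩
  -- measure
  set m : Inp → ℕ := fun x => (T.filter (fun y => P y x)).card with hm
  have hmlt : ∀ x ∈ T, ∀ z ∈ T, P z x → m z < m x := by
    intro x hx z hz hzx
    apply Finset.card_lt_card
    constructor
    · intro w hw
      rw [Finset.mem_filter] at hw ⊢
      exact ⟨hw.1, Ptrans hw.2 hzx⟩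
    · intro hsub
      have : z ∈ T.filter (fun y => P y z) := hsub (Finset.mem_filter.mpr ⟨hz, hzx⟩)
      exact Pirrefl z (Finset.mem_filter.mp this).2
  suffices H : ∀ n : ℕ, ∀ x ∈ T, m x < n → Dom x →
      ∃ S : Finset Inp, S ⊆ T ∧ LocDom Cov cost x S ∧ ∀ z ∈ S, ¬ Dom z by
    exact H (m i + 1) i hi (Nat.lt_succ_self _) hdom
  intro n
  induction n with
  | zero => intro x _ hx; exact absurd hx (Nat.not_lt_zero _)
  | succ n ih =>
    intro x hx hmx hdx
    obtain ⟨S₀, hS₀T, hL₀⟩ := hdx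
    -- for each z ∈ S₀, find a good replacement set
    have hF : ∀ z : Inp, ∃ Fz : Finset Inp, z ∈ S₀ →
        Fz ⊆ T ∧ (∀ w ∈ Fz, ¬ Dom w) ∧ Cov z ⊆ Fz.biUnion Cov ∧
          ∑ w ∈ Fz, cost w ≤ cost z := by
      intro z
      by_cases hz : z ∈ S₀
      · have hzT : z ∈ T := hS₀T hz
        by_cases hdz : Dom z
        · have hzx : P z x := key x hx S₀ hS₀T hL₀ z hz
          have hmz : m z < n := Nat.lt_of_lt_of_le (hmlt x hx z hzT hzx) (Nat.lt_succ_iff.mp hmx)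
          obtain ⟨S, hST, hLS, hnd⟩ := ih z hzT hmz hdz
          exact ⟨S, fun _ => ⟨hST, hnd, hLS.2.1, hLS.2.2⟩⟩
        · refine ⟨{z}, fun _ => ⟨Finset.singleton_subset_iff.mpr hzT, ?_, by simp, by simp⟩⟩
          intro w hw
          rw [Finset.mem_singleton] at hw
          exact hw ▸ hdz
      · exact ⟨∅, fun h => absurd h hz⟩
    choose F hFspec using hF
    refine ⟨S₀.biUnion F, ?_, ⟨?_, ?_, ?_⟩, ?_⟩
    · intro w hw
      obtain ⟨z, hz, hwz⟩ := Finset.mem_biUnion.mp hw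
      exact (hFspec z hz).1 hwz
    · -- x ∉ S
      intro hxin
      obtain ⟨z, hz, hxz⟩ := Finset.mem_biUnion.mp hxin
      exact (hFspec z hz).2.1 x hxz ⟨S₀, hS₀T, hL₀⟩
    · -- coverage
      intro o ho
      obtain ⟨z, hz, hoz⟩ := Finset.mem_biUnion.mp (hL₀.2.1 ho)
      obtain ⟨w, hw, how⟩ := Finset.mem_biUnion.mp ((hFspec z hz).2.2.1 hoz)
      exact Finset.mem_biUnion.mpr ⟨w, Finset.mem_biUnion.mpr ⟨z, hz, hw⟩, how⟩
    · -- cost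
      calc ∑ w ∈ S₀.biUnion F, cost w
          ≤ ∑ z ∈ S₀, ∑ w ∈ F z, cost w := by
            apply sum_biUnion_le_of_nonneg
            intro a ha
            obtain ⟨z, hz, haz⟩ := Finset.mem_biUnion.mp ha
            exact (hcost a ((hFspec z hz).1 haz)).le
        _ ≤ ∑ z ∈ S₀, cost z := Finset.sum_le_sum fun z hz => (hFspec z hz).2.2.2
        _ ≤ cost x := hL₀.2.2
    · -- non-dominated
      intro w hw
      obtain ⟨z, hz, hwz⟩ := Finset.mem_biUnion.mp hw
      exact (hFspec z hz).2.1 w hwz
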